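/- Let X be a complete separable metric space and (S_k)_{k∈ℕ} a sequence of open subsets of X whose family forms a basis for the topology of X and in which every term occurs infinitely often (for each k there are infinitely many l with S_l = S_k). Write S^1 = S and S^0 = X \ S, and let φ : X → {0,1}^ℕ be φ(x) = (χ_{S_k}(x))_{k∈ℕ}. Then a sequence (i_k)_{k∈ℕ} ∈ {0,1}^ℕ belongs to the image φ(X) if and only if: (1) for every n ∈ ℕ, ⋂_{k=1}^{n} S_k^{i_k} ≠ ∅; (2) there exists j with i_j = 1 and diam(S_j) ≤ 1; and (3) for every j with i_j = 1 there exists l > j with i_l = 1, closure(S_l) ⊆ S_j, and diam(S_l) ≤ diam(S_j)/2. -/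

import Mathlib

open MeasureTheory Filter Set Topology

namespace ErgodicDecomposition

variable {X : Type*}

/-- `ℙ` is a partition of `X`: every point lies in exactly one element of `ℙ`. -/
def IsPartition (ℙ : Set (Set X)) : Prop := ∀ x : X, ∃! P, P ∈ ℙ ∧ x ∈ P

open Classical in
/-- The element of `ℙ` containing `x` (with junk value `∅` if there is none);
this is the canonical projection `τ̂ : X → ℙ`. -/
noncomputable def partOf (ℙ : Set (Set X)) (x : X) : Set X :=
  if h : ∃ P, P ∈ ℙ ∧ x ∈ P then h.choose else ∅

/-- `ν` is a disintegration of `μ` with respect to the partition `ℙ`.  All statements about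
the quotient space `ℙ` (its σ-algebra, the quotient measure `μ̂`, measurability of
`P ↦ μ_P(E)` and integration against `μ̂`) are expressed, equivalently, after pulling back
along the canonical projection `x ↦ partOf ℙ x`, since the σ-algebra of `ℙ` is by definition
the pushforward σ-algebra and `μ̂` is the pushforward measure. -/
def IsDisintegration [MeasurableSpace X] (μ : Measure X) (ℙ : Set (Set X))
    (ν : Set X → Measure X) : Prop :=
  (∀ P ∈ ℙ, IsProbabilityMeasure (ν P)) ∧
  (∀ᵐ x ∂μ, ν (partOf ℙ x) (partOf ℙ x) = 1) ∧
  (∀ E : Set X, MeasurableSet E →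
    Measurable (fun x => ν (partOf ℙ x) E) ∧ μ E = ∫⁻ x, ν (partOf ℙ x) E ∂μ)

/-- `ℙ` is a measurable partition for `μ`: a partition of `X` into measurable sets such that
there are a full measure set `X₀` and a refining sequence of countable partitions `Ps n` into
measurable sets with `P(x) = ⋂ n, P_n(x)` for every `x ∈ X₀`. -/
def IsMeasurablePartition [MeasurableSpace X] (μ : Measure X) (ℙ : Set (Set X)) : Prop :=
  IsPartition ℙ ∧ (∀ P ∈ ℙ, MeasurableSet P) ∧
  ∃ X₀ : Set X, MeasurableSet X₀ ∧ μ X₀ = 1 ∧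
  ∃ Ps : ℕ → Set (Set X),
    (∀ n, (Ps n).Countable) ∧
    (∀ n, IsPartition (Ps n)) ∧
    (∀ n, ∀ P ∈ Ps n, MeasurableSet P) ∧
    (∀ n, ∀ B ∈ Ps (n + 1), ∃ A ∈ Ps n, B ⊆ A) ∧
    (∀ x ∈ X₀, partOf ℙ x = ⋂ n, partOf (Ps n) x)

open Classical in
/-- `τ(x, A)`: the lim-inf of the asymptotic frequency of visits of the orbit of `x` to `A`. -/
noncomputable def visitFreq (f : X → X) (A : Set X) (x : X) : ℝ :=
  atTop.liminf fun n : ℕ =>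
    (((Finset.range n).filter fun i => f^[i] x ∈ A).card : ℝ) / n

/-- The equivalence class of `x` for the relation `x ∼ y ↔ τ(x,A) = τ(y,A)` for all `A ∈ 𝒜₀`. -/
def dynClass (f : X → X) (𝒜₀ : Set (Set X)) (x : X) : Set X :=
  {y | ∀ A ∈ 𝒜₀, visitFreq f A y = visitFreq f A x}

/-- The dynamical partition of `X` with respect to `f` and the countable algebra `𝒜₀`. -/
def dynPartition (f : X → X) (𝒜₀ : Set (Set X)) : Set (Set X) :=
  {P | ∃ x : X, P = dynClass f 𝒜₀ x}


open Classical in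
/-- The map `φ : X → {0,1}^ℕ`, `φ(x) = (χ_{S k}(x))ₖ`. -/
noncomputable def phi {X : Type*} (S : ℕ → Set X) (x : X) : ℕ → Bool :=
  fun k => decide (x ∈ S k)

/-- `S_k^{i_k}`: `S k` if `i k = 1` and its complement if `i k = 0`. -/
def side {X : Type*} (S : ℕ → Set X) (i : ℕ → Bool) (k : ℕ) : Set X :=
  if i k = true then S k else (S k)ᶜ

/-- Auxiliary: in a metric space with a basis `range S`, every point of an open set `u`
lies in a basic set of small diameter whose closure is inside `u`. -/
lemma exists_small_basic {X : Type*} [MetricSpace X] {S : ℕ → Set X}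
    (hbasis : TopologicalSpace.IsTopologicalBasis (Set.range S))
    {u : Set X} (hu : IsOpen u) {x : X} (hx : x ∈ u) {ε : ℝ} (hε : 0 < ε) :
    ∃ m, x ∈ S m ∧ S m ⊆ u ∧ closure (S m) ⊆ u ∧
      EMetric.diam (S m) ≤ ENNReal.ofReal (2 * ε) := by
  obtain ⟨r, hr, hball⟩ := Metric.isOpen_iff.1 hu x hx
  set δ := min ε (r / 2) with hδdef
  have hδ : 0 < δ := lt_min hε (by linarith)
  obtain ⟨v, ⟨m, rfl⟩, hxv, hvsub⟩ := hbasis.exists_subset_of_mem_open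
    (show x ∈ Metric.ball x δ ∩ u from ⟨Metric.mem_ball_self hδ, hx⟩)
    ((Metric.isOpen_ball).inter hu)
  have hsub : S m ⊆ u := fun y hy => (hvsub hy).2
  have hclsub : closure (S m) ⊆ u := by
    have h1 : closure (S m) ⊆ Metric.closedBall x δ :=
      closure_minimal (fun y hy => Metric.mem_closedBall.2 (le_of_lt (hvsub hy).1))
        Metric.isClosed_closedBall
    intro y hy
    apply hball
    have := h1 hy
    rw [Metric.mem_closedBall] at this
    rw [Metric.mem_ball]
    have hδr : δ ≤ r / 2 := min_le_right _ _
    linarith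
  refine ⟨m, hxv, hsub, hclsub, ?_⟩
  apply EMetric.diam_le
  intro p hp q hq
  rw [edist_dist]
  apply ENNReal.ofReal_le_ofReal
  have hp' := (hvsub hp).1
  have hq' := (hvsub hq).1
  rw [Metric.mem_ball] at hp' hq'
  have hδε : δ ≤ ε := min_le_left _ _
  calc dist p q ≤ dist p x + dist x q := dist_triangle _ _ _
    _ ≤ δ + δ := by
        rw [dist_comm x q]; exact add_le_add hp'.le hq'.le
    _ ≤ 2 * ε := by linarith

/-- Auxiliary: given `x ∈ S j` we can find a basic set around `x` whose closure lies
in `S j` and whose diameter is at most half that of `S j`. -/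
lemma exists_half_basic {X : Type*} [MetricSpace X] {S : ℕ → Set X}
    (hbasis : TopologicalSpace.IsTopologicalBasis (Set.range S))
    (hopen : ∀ k, IsOpen (S k)) {j : ℕ} {x : X} (hx : x ∈ S j) :
    ∃ m, x ∈ S m ∧ closure (S m) ⊆ S j ∧
      EMetric.diam (S m) ≤ EMetric.diam (S j) / 2 := by
  by_cases h0 : EMetric.diam (S j) = 0
  · obtain ⟨m, hm1, hm2, hm3, _⟩ :=
      exists_small_basic hbasis (hopen j) hx (one_pos : (0:ℝ) < 1)
    exact ⟨m, hm1, hm3, by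
      calc EMetric.diam (S m) ≤ EMetric.diam (S j) := EMetric.diam_mono hm2
        _ = EMetric.diam (S j) / 2 := by rw [h0]; simp⟩
  · by_cases htop : EMetric.diam (S j) = ⊤
    · obtain ⟨m, hm1, _, hm3, _⟩ :=
        exists_small_basic hbasis (hopen j) hx (one_pos : (0:ℝ) < 1)
      refine ⟨m, hm1, hm3, ?_⟩
      rw [htop]
      rw [ENNReal.top_div_of_ne_top (by norm_num)]
      exact le_top
    · have hdpos : 0 < (EMetric.diam (S j)).toReal :=
        ENNReal.toReal_pos h0 htop
      obtain ⟨m, hm1, _, hm3, hm4⟩ :=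
        exists_small_basic hbasis (hopen j) hx
          (show (0:ℝ) < (EMetric.diam (S j)).toReal / 8 by linarith)
      refine ⟨m, hm1, hm3, le_trans hm4 ?_⟩
      apply ENNReal.ofReal_le_of_le_toReal
      rw [ENNReal.toReal_div]
      simp only [ENNReal.toReal_ofNat]
      linarith

/-- characterization of the image `φ(X) ⊆ {0,1}^ℕ` for a complete separable
metric space `X` and a sequence of basic open sets in which every term occurs infinitely
often. -/
theorem mem_image_phi_iff {X : Type*} [MetricSpace X] [CompleteSpace X]
    [TopologicalSpace.SeparableSpace X]
    (S : ℕ → Set X) (hopen : ∀ k, IsOpen (S k))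
    (hbasis : TopologicalSpace.IsTopologicalBasis (Set.range S))
    (hrep : ∀ k, {l | S l = S k}.Infinite)
    (i : ℕ → Bool) :
    (∃ x, phi S x = i) ↔
      ((∀ n : ℕ, (⋂ k ∈ Finset.range n, side S i k).Nonempty) ∧
       (∃ j, i j = true ∧ EMetric.diam (S j) ≤ 1) ∧
       (∀ j, i j = true → ∃ l, j < l ∧ i l = true ∧ closure (S l) ⊆ S j ∧
          EMetric.diam (S l) ≤ EMetric.diam (S j) / 2)) := by
  constructor
  · rintro ⟨x, rfl⟩
    have hi : ∀ k, phi S x k = true ↔ x ∈ S k := by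
      intro k; simp [phi]
    refine ⟨?_, ?_, ?_⟩
    · intro n
      refine ⟨x, ?_⟩
      simp only [Set.mem_iInter]
      intro k _
      unfold side
      by_cases hk : phi S x k = true
      · rw [if_pos hk]; exact (hi k).1 hk
      · rw [if_neg hk]
        intro hxk
        exact hk ((hi k).2 hxk)
    · obtain ⟨m, hm1, _, _, hm4⟩ :=
        exists_small_basic hbasis isOpen_univ (Set.mem_univ x)
          (show (0:ℝ) < 1/2 by norm_num)
      refine ⟨m, (hi m).2 hm1, ?_⟩
      calc EMetric.diam (S m) ≤ ENNReal.ofReal (2 * (1/2)) := hm4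
        _ = 1 := by norm_num
    · intro j hj
      have hxj : x ∈ S j := (hi j).1 hj
      obtain ⟨m, hm1, hm2, hm3⟩ := exists_half_basic hbasis hopen hxj
      obtain ⟨l, hlm, hjl⟩ := (hrep m).exists_gt j
      have hSl : S l = S m := hlm
      refine ⟨l, hjl, (hi l).2 (hSl ▸ hm1), ?_, ?_⟩
      · rw [hSl]; exact hm2
      · rw [hSl]; exact hm3
  · rintro ⟨h1, ⟨j0, hj0, hd0⟩, h3⟩
    -- points witnessing condition (1)
    have hp : ∀ n : ℕ, ∃ y : X, ∀ k < n, y ∈ side S i k := by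
      intro n
      obtain ⟨y, hy⟩ := h1 n
      refine ⟨y, fun k hk => ?_⟩
      simp only [Set.mem_iInter, Finset.mem_range] at hy
      exact hy k hk
    choose p hpmem using hp
    have hpT : ∀ {k n : ℕ}, i k = true → k < n → p n ∈ S k := by
      intro k n hk hkn
      have := hpmem n k hkn
      unfold side at this
      rwa [if_pos hk] at this
    have hpF : ∀ {k n : ℕ}, i k = false → k < n → p n ∉ S k := by
      intro k n hk hkn
      have := hpmem n k hkn
      unfold side at this
      rwa [if_neg (by simp [hk])] at this
    -- the chain
    let g : ℕ → {j : ℕ // i j = true} := fun n => Nat.rec ⟨j0, hj0⟩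
      (fun _ prev => ⟨(h3 prev.1 prev.2).choose, (h3 prev.1 prev.2).choose_spec.2.1⟩) n
    set c : ℕ → ℕ := fun n => (g n).1 with hc
    have hct : ∀ n, i (c n) = true := fun n => (g n).2
    have hstep : ∀ n, c n < c (n + 1) ∧ closure (S (c (n + 1))) ⊆ S (c n) ∧
        EMetric.diam (S (c (n + 1))) ≤ EMetric.diam (S (c n)) / 2 := by
      intro n
      have hspec := (h3 (c n) (hct n)).choose_spec
      exact ⟨hspec.1, hspec.2.2.1, hspec.2.2.2⟩
    have hdiam : ∀ n, EMetric.diam (S (c n)) ≤ (2 : ENNReal)⁻¹ ^ n := by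
      intro n
      induction n with
      | zero => rw [pow_zero]; exact hd0
      | succ n ih =>
        calc EMetric.diam (S (c (n + 1))) ≤ EMetric.diam (S (c n)) / 2 := (hstep n).2.2
          _ ≤ (2 : ENNReal)⁻¹ ^ n / 2 := ENNReal.div_le_div_right ih 2
          _ = (2 : ENNReal)⁻¹ ^ (n + 1) := by rw [pow_succ, div_eq_mul_inv]
    have hnest : ∀ n k, S (c (n + k)) ⊆ S (c n) := by
      intro n k
      induction k with
      | zero => exact subset_rfl
      | succ k ih =>
        intro y hy
        exact ih ((hstep (n + k)).2.1 (subset_closure hy))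
    have hnest' : ∀ {n m : ℕ}, n ≤ m → S (c m) ⊆ S (c n) := by
      intro n m hnm
      obtain ⟨k, rfl⟩ := Nat.exists_eq_add_of_le hnm
      exact hnest n k
    -- the Cauchy sequence
    set q : ℕ → X := fun n => p (c n + 1) with hq
    have hqmem : ∀ n, q n ∈ S (c n) := fun n => hpT (hct n) (Nat.lt_succ_self _)
    have hqmem' : ∀ {n m : ℕ}, n ≤ m → q m ∈ S (c n) :=
      fun {n m} hnm => hnest' hnm (hqmem m)
    have hcauchy : CauchySeq q := by
      apply cauchySeq_of_edist_le_geometric 2⁻¹ 1 (by simp) ENNReal.one_ne_top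
      intro n
      rw [one_mul]
      calc edist (q n) (q (n + 1)) ≤ EMetric.diam (S (c n)) :=
            EMetric.edist_le_diam_of_mem (hqmem n) (hqmem' (Nat.le_succ n))
        _ ≤ (2 : ENNReal)⁻¹ ^ n := hdiam n
    obtain ⟨x, hx⟩ := cauchySeq_tendsto_of_complete hcauchy
    have hxcl : ∀ n, x ∈ closure (S (c n)) := by
      intro n
      apply mem_closure_of_tendsto hx
      filter_upwards [Filter.eventually_ge_atTop n] with m hm
      exact hqmem' hm
    have hxmem : ∀ n, x ∈ S (c n) := fun n => (hstep n).2.1 (hxcl (n + 1))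
    -- distance control: x is within diam (S (c n)) of any point of S (c n)
    have hdistx : ∀ n y, y ∈ S (c n) → edist x y ≤ (2 : ENNReal)⁻¹ ^ n := by
      intro n y hy
      calc edist x y ≤ EMetric.diam (S (c n)) :=
            EMetric.edist_le_diam_of_mem (hxmem n) hy
        _ ≤ _ := hdiam n
    classical
    refine ⟨x, ?_⟩
    funext k
    unfold phi
    cases hik : i k
    · -- i k = false : show x ∉ S k
      rw [decide_eq_false_iff_not]
      intro hxk
      obtain ⟨ε, hε, hball⟩ := EMetric.isOpen_iff.1 (hopen k) x hxk
      obtain ⟨n, hn⟩ := ENNReal.exists_inv_two_pow_lt hε.ne'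
      have hsub : S (c n) ⊆ S k := by
        intro y hy
        apply hball
        rw [EMetric.mem_ball, edist_comm]
        exact lt_of_le_of_lt (hdistx n y hy) hn
      have hz : p (max (c n) k + 1) ∈ S (c n) :=
        hpT (hct n) (Nat.lt_succ_of_le (le_max_left _ _))
      exact hpF hik (Nat.lt_succ_of_le (le_max_right _ _)) (hsub hz)
    · -- i k = true : show x ∈ S k
      rw [decide_eq_true_eq]
      obtain ⟨l, hkl, hil, hclos, _⟩ := h3 k hik
      have hxcl' : x ∈ closure (S l) := by
        rw [EMetric.mem_closure_iff]
        intro ε hε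
        obtain ⟨n, hn⟩ := ENNReal.exists_inv_two_pow_lt hε.ne'
        refine ⟨p (max (c n) l + 1), hpT hil (Nat.lt_succ_of_le (le_max_right _ _)), ?_⟩
        exact lt_of_le_of_lt
          (hdistx n _ (hpT (hct n) (Nat.lt_succ_of_le (le_max_left _ _)))) hn
      exact hclos hxcl'

end ErgodicDecomposition
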